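/- Fix natural numbers m, r ≥ 1 and a circuit topology T = ((k_1, S_1), …, (k_r, S_r)) for circuits with m wires (so 1 ≤ k_i and S_i : Fin k_i ↪ Fin m injective), and let s = Σ_{i=1}^{r} 2 · (2^{k_i})² (the total number of real and imaginary parts of all gate matrix entries). Then for every pair of basis bit strings b, b' : Fin m → Fin 2, there exists a real polynomial P_{b,b'} ∈ MvPolynomial (Fin s) ℝ of total degree at most 2r such that for every quantum circuit C with topology T (i.e., every choice of unitary gate matrices U_1, …, U_r of the prescribed sizes), the squared modulus of the (b, b') entry of U(C) equals P_{b,b'} evaluated at the point of ℝ^s consisting of the real and imaginary parts of the entries of U_1, …, U_r. -/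

import Mathlib

/-- Computational basis bit strings of an `m`-qubit register. -/
abbrev BitStr (m : ℕ) := Fin m → Fin 2

/-- The extension of a `k`-qubit gate matrix `U` to an `m`-qubit register along an
(injective) wire assignment `S : Fin k → Fin m`: the `(b, b')` entry equals
`U (b ∘ S) (b' ∘ S)` if `b` and `b'` agree off the range of `S`, and `0` otherwise. -/
def ExtMat {k m : ℕ} (S : Fin k → Fin m) (U : Matrix (BitStr k) (BitStr k) ℂ) :
    Matrix (BitStr m) (BitStr m) ℂ :=
  fun b b' =>
    if (∀ i, (∀ j, S j ≠ i) → b i = b' i) then U (fun j => b (S j)) (fun j => b' (S j)) else 0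

/-- The matrix `U(C) = Ext_{S_r}(U_r) ⋯ Ext_{S_1}(U_1)` implemented by a circuit whose `i`-th
gate acts via `U i` on the wires `S i`. -/
noncomputable def circMat {m r : ℕ} {k : Fin r → ℕ} (S : ∀ i, Fin (k i) → Fin m)
    (U : ∀ i, Matrix (BitStr (k i)) (BitStr (k i)) ℂ) : Matrix (BitStr m) (BitStr m) ℂ :=
  (List.ofFn fun i => ExtMat (S i) (U i)).reverse.prod

/-- The basis bit string of length `n + 1 + t` consisting of `x` on the first `n` wires,
`y` on wire `n`, and `0` on the remaining `t` ancilla wires. -/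
def padBits {n : ℕ} (t : ℕ) (x : Fin n → Fin 2) (y : Fin 2) : BitStr (n + 1 + t) :=
  fun i => if h : (i : ℕ) < n then x ⟨i, h⟩ else if (i : ℕ) = n then y else 0

/-- A matrix `M` on `n + 1 + t` qubits computes the Boolean function `f` (probabilistically):
the squared modulus of the entry in row `(x', y, 0^t)` and column `(x, 0, 0^t)` is `> 1/2`
when `x' = x` and `y = f x`, and `< 1/2` otherwise. -/
def MatComputes {n t : ℕ} (M : Matrix (BitStr (n + 1 + t)) (BitStr (n + 1 + t)) ℂ)
    (f : (Fin n → Fin 2) → Fin 2) : Prop :=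
  ∀ (x x' : Fin n → Fin 2) (y : Fin 2),
    (x' = x ∧ y = f x →
      1 / 2 < Complex.normSq (M (padBits t x' y) (padBits t x 0))) ∧
    (¬(x' = x ∧ y = f x) →
      Complex.normSq (M (padBits t x' y) (padBits t x 0)) < 1 / 2)

/-- A matrix `M` on `n + 1` qubits computes `f` stringently: it maps each basis vector
`|x, y⟩` to `|x, y ⊕ f x⟩`. -/
def MatComputesStringent {n : ℕ} (M : Matrix (BitStr (n + 1)) (BitStr (n + 1)) ℂ)
    (f : (Fin n → Fin 2) → Fin 2) : Prop :=
  ∀ (x : Fin n → Fin 2) (y : Fin 2) (b : BitStr (n + 1)),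
    M b (padBits 0 x y) = if b = padBits 0 x (y + f x) then 1 else 0

open MvPolynomial

lemma entry_re_im_poly {ι V σ : Type*} [Fintype ι] [DecidableEq ι] (val : V → σ → ℝ)
    (L : List (V → Matrix ι ι ℂ))
    (hL : ∀ A ∈ L, ∀ b b' : ι, ∃ p q : MvPolynomial σ ℝ,
      p.totalDegree ≤ 1 ∧ q.totalDegree ≤ 1 ∧
      ∀ v, ((A v) b b').re = MvPolynomial.eval (val v) p ∧
           ((A v) b b').im = MvPolynomial.eval (val v) q) :
    ∀ b b' : ι, ∃ p q : MvPolynomial σ ℝ,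
      p.totalDegree ≤ L.length ∧ q.totalDegree ≤ L.length ∧
      ∀ v, ((L.map (fun A => A v)).prod b b').re = MvPolynomial.eval (val v) p ∧
           ((L.map (fun A => A v)).prod b b').im = MvPolynomial.eval (val v) q := by
  induction L with
  | nil =>
    intro b b'
    refine ⟨if b = b' then 1 else 0, 0, ?_, ?_, ?_⟩
    · split <;> simp [totalDegree_one]
    · simp
    · intro v
      simp only [List.map_nil, List.prod_nil, Matrix.one_apply]
      split <;> simp
  | cons A L ih =>
    have hA := hL A List.mem_cons_self
    have hL' : ∀ B ∈ L, ∀ b b' : ι, ∃ p q : MvPolynomial σ ℝ,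
        p.totalDegree ≤ 1 ∧ q.totalDegree ≤ 1 ∧
        ∀ v, ((B v) b b').re = MvPolynomial.eval (val v) p ∧
             ((B v) b b').im = MvPolynomial.eval (val v) q :=
      fun B hB => hL B (List.mem_cons_of_mem _ hB)
    intro b b'
    choose pA qA hpA hqA hevA using hA b
    choose pL qL hpL hqL hevL using fun c => ih hL' c b'
    refine ⟨∑ c : ι, (pA c * pL c - qA c * qL c),
            ∑ c : ι, (pA c * qL c + qA c * pL c), ?_, ?_, ?_⟩
    · refine (totalDegree_finset_sum _ _).trans (Finset.sup_le fun c _ => ?_)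
      have h1 : (pA c * pL c).totalDegree ≤ 1 + L.length :=
        (totalDegree_mul _ _).trans (add_le_add (hpA c) (hpL c))
      have h2 : (qA c * qL c).totalDegree ≤ 1 + L.length :=
        (totalDegree_mul _ _).trans (add_le_add (hqA c) (hqL c))
      calc (pA c * pL c - qA c * qL c).totalDegree
          ≤ max (pA c * pL c).totalDegree (-(qA c * qL c)).totalDegree := by
            rw [sub_eq_add_neg]; exact totalDegree_add _ _
        _ ≤ (A :: L).length := by rw [totalDegree_neg]; simp only [List.length_cons]; omega
    · refine (totalDegree_finset_sum _ _).trans (Finset.sup_le fun c _ => ?_)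
      have h1 : (pA c * qL c).totalDegree ≤ 1 + L.length :=
        (totalDegree_mul _ _).trans (add_le_add (hpA c) (hqL c))
      have h2 : (qA c * pL c).totalDegree ≤ 1 + L.length :=
        (totalDegree_mul _ _).trans (add_le_add (hqA c) (hpL c))
      calc (pA c * qL c + qA c * pL c).totalDegree
          ≤ max _ _ := totalDegree_add _ _
        _ ≤ (A :: L).length := by simp only [List.length_cons]; omega
    · intro v
      have hprod : ((A :: L).map (fun A => A v)).prod b b'
          = ∑ c : ι, (A v) b c * ((L.map (fun A => A v)).prod c b') := by
        simp [Matrix.mul_apply]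
      constructor
      · rw [hprod, Complex.re_sum, map_sum]
        refine Finset.sum_congr rfl fun c _ => ?_
        rw [Complex.mul_re, (hevA c v).1, (hevA c v).2, (hevL c v).1, (hevL c v).2]
        simp
      · rw [hprod, Complex.im_sum, map_sum]
        refine Finset.sum_congr rfl fun c _ => ?_
        rw [Complex.mul_im, (hevA c v).1, (hevA c v).2, (hevL c v).1, (hevL c v).2]
        simp

open MvPolynomial in
theorem circuit_entry_normSq_is_polynomial_in_gate_entries
    (m r : ℕ) (hm : 1 ≤ m) (hr : 1 ≤ r)
    (k : Fin r → ℕ) (hk : ∀ i, 1 ≤ k i)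
    (S : ∀ i, Fin (k i) → Fin m) (hS : ∀ i, Function.Injective (S i))
    (s : ℕ) (hs : s = ∑ i : Fin r, 2 * 2 ^ k i * 2 ^ k i)
    -- an identification of the `s` coordinates with the real/imaginary parts
    -- (indexed by `Bool`) of the entries of the `r` gate matrices
    (e : (Σ i : Fin r, Bool × (BitStr (k i) × BitStr (k i))) ≃ Fin s)
    (b b' : BitStr m) :
    ∃ P : MvPolynomial (Fin s) ℝ, P.totalDegree ≤ 2 * r ∧
      ∀ U : ∀ i, Matrix (BitStr (k i)) (BitStr (k i)) ℂ,
        (∀ i, U i ∈ Matrix.unitaryGroup (BitStr (k i)) ℂ) →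
        Complex.normSq (circMat S U b b') =
          MvPolynomial.eval
            (fun j =>
              if (e.symm j).2.1 then (U (e.symm j).1 (e.symm j).2.2.1 (e.symm j).2.2.2).re
              else (U (e.symm j).1 (e.symm j).2.2.1 (e.symm j).2.2.2).im) P := by
  classical
  set val : (∀ i, Matrix (BitStr (k i)) (BitStr (k i)) ℂ) → Fin s → ℝ :=
    fun U j =>
      if (e.symm j).2.1 then (U (e.symm j).1 (e.symm j).2.2.1 (e.symm j).2.2.2).re
      else (U (e.symm j).1 (e.symm j).2.2.1 (e.symm j).2.2.2).im with hval
  set L : List ((∀ i, Matrix (BitStr (k i)) (BitStr (k i)) ℂ) → Matrix (BitStr m) (BitStr m) ℂ) :=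
    (List.ofFn fun i => fun U => ExtMat (S i) (U i)).reverse with hLdef
  have hmem : ∀ A ∈ L, ∃ i, A = fun U => ExtMat (S i) (U i) := by
    intro A hA
    rw [hLdef, List.mem_reverse, List.mem_ofFn] at hA
    obtain ⟨i, hi⟩ := hA
    exact ⟨i, hi.symm⟩
  have hL : ∀ A ∈ L, ∀ b b' : BitStr m, ∃ p q : MvPolynomial (Fin s) ℝ,
      p.totalDegree ≤ 1 ∧ q.totalDegree ≤ 1 ∧
      ∀ U, ((A U) b b').re = MvPolynomial.eval (val U) p ∧
           ((A U) b b').im = MvPolynomial.eval (val U) q := by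
    intro A hA b₀ b₀'
    obtain ⟨i, rfl⟩ := hmem A hA
    by_cases hC : ∀ i', (∀ j, S i j ≠ i') → b₀ i' = b₀' i'
    · refine ⟨MvPolynomial.X (e ⟨i, (true, (fun j => b₀ (S i j), fun j => b₀' (S i j)))⟩),
        MvPolynomial.X (e ⟨i, (false, (fun j => b₀ (S i j), fun j => b₀' (S i j)))⟩),
        le_of_eq (totalDegree_X _), le_of_eq (totalDegree_X _), fun U => ?_⟩
      simp only [ExtMat, Equiv.symm_apply_apply, if_true, if_pos hC]
      refine ⟨?_, ?_⟩ <;>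
        · simp only [MvPolynomial.eval_X, hval]
          rw [Equiv.symm_apply_apply]
          simp
    · exact ⟨0, 0, by simp, by simp, fun U => by simp [ExtMat, hC]⟩
  have key := entry_re_im_poly val L hL b b'
  obtain ⟨p, q, hp, hq, hev⟩ := key
  have hlen : L.length = r := by simp [hLdef]
  rw [hlen] at hp hq
  refine ⟨p * p + q * q, ?_, fun U hU => ?_⟩
  · refine (totalDegree_add _ _).trans (max_le ?_ ?_) <;>
      refine (totalDegree_mul _ _).trans ?_ <;> omega
  · have hcirc : circMat S U = (L.map (fun A => A U)).prod := by
      simp only [hLdef, circMat, List.map_reverse, List.map_ofFn]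
      rfl
    rw [hcirc]
    obtain ⟨h1, h2⟩ := hev U
    rw [Complex.normSq_apply, h1, h2, map_add, map_mul, map_mul]
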